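/- Let G be a topological gyrogroup and H a closed strongly L-subgyrogroup of G. If the subspace H and the quotient space G/H are both first-countable, then the space G is first-countable. -/

import Mathlib

universe u

/-- A gyrogroup: a groupoid with identity, inverses, gyroautomorphisms satisfying the
left gyroassociative law and the left loop property. -/
class Gyrogroup (G : Type u) where
  add : G → G → G
  zero : G
  neg : G → G
  gyr : G → G → G → G
  zero_add : ∀ x, add zero x = x
  add_zero : ∀ x, add x zero = x
  neg_add : ∀ x, add (neg x) x = zero
  add_neg : ∀ x, add x (neg x) = zero
  gyr_bijective : ∀ a b, Function.Bijective (gyr a b)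
  gyr_add : ∀ a b x y, gyr a b (add x y) = add (gyr a b x) (gyr a b y)
  gyrassoc : ∀ a b z, add a (add b z) = add (add a b) (gyr a b z)
  loop : ∀ a b, gyr (add a b) b = gyr a b

/-- A topological gyrogroup: the operation is jointly continuous and inversion is continuous. -/
class TopologicalGyrogroup (G : Type u) [TopologicalSpace G] [Gyrogroup G] : Prop where
  continuous_add : Continuous fun p : G × G => Gyrogroup.add p.1 p.2
  continuous_neg : Continuous (Gyrogroup.neg : G → G)

/-- `H` is a subgyrogroup of `G` (by the subgyrogroup criterion: nonempty and closed
under the operation and inversion; this is equivalent to `(H, ⊕|H)` being itself a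
gyrogroup whose gyroautomorphisms are the restrictions of those of `G`). -/
structure IsSubgyrogroup {G : Type u} [Gyrogroup G] (H : Set G) : Prop where
  nonempty : H.Nonempty
  add_mem : ∀ ⦃a⦄, a ∈ H → ∀ ⦃b⦄, b ∈ H → Gyrogroup.add a b ∈ H
  neg_mem : ∀ ⦃a⦄, a ∈ H → Gyrogroup.neg a ∈ H

/-- An `L`-subgyrogroup: a subgyrogroup with `gyr[a,h](H) = H` for all `a ∈ G`, `h ∈ H`. -/
structure IsLSubgyrogroup {G : Type u} [Gyrogroup G] (H : Set G)
    extends IsSubgyrogroup H : Prop where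
  gyr_image : ∀ (a : G), ∀ ⦃h⦄, h ∈ H → Gyrogroup.gyr a h '' H = H

/-- A strongly `L`-subgyrogroup: a subgyrogroup with `gyr[a,b](H) ⊆ H` for all `a, b ∈ G`. -/
structure IsStronglyLSubgyrogroup {G : Type u} [Gyrogroup G] (H : Set G)
    extends IsSubgyrogroup H : Prop where
  gyr_image_subset : ∀ a b : G, Gyrogroup.gyr a b '' H ⊆ H

/-- The pointwise sum `A ⊕ B = {a ⊕ b : a ∈ A, b ∈ B}` of two subsets. -/
def setAdd {G : Type u} [Gyrogroup G] (A B : Set G) : Set G :=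
  Set.image2 Gyrogroup.add A B

/-- The left coset `a ⊕ H = {a ⊕ h : h ∈ H}`. -/
def lCoset {G : Type u} [Gyrogroup G] (H : Set G) (a : G) : Set G :=
  (fun h => Gyrogroup.add a h) '' H

/-- The setoid on `G` identifying points with the same left coset modulo `H`. -/
def cosetSetoid {G : Type u} [Gyrogroup G] (H : Set G) : Setoid G :=
  ⟨fun x y => lCoset H x = lCoset H y,
   ⟨fun _ => rfl, fun h => h.symm, fun h₁ h₂ => h₁.trans h₂⟩⟩

/-- The coset space `G/H`, carrying the quotient topology: a set `O ⊆ G/H` is open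
iff `π⁻¹(O)` is open in `G`. -/
abbrev GyroQuot {G : Type u} [Gyrogroup G] (H : Set G) : Type u :=
  Quotient (cosetSetoid H)

/-- The natural quotient map `π : G → G/H`, `a ↦ a ⊕ H`. -/
def qmap {G : Type u} [Gyrogroup G] (H : Set G) (a : G) : GyroQuot H :=
  Quotient.mk (cosetSetoid H) a

section Algebra

open Gyrogroup

variable {G : Type u} [Gyrogroup G]

namespace GyroAux

theorem add_left_injective (a : G) : Function.Injective (add a) := by
  intro x y h
  have e : ∀ z : G, add (neg a) (add a z) = gyr (neg a) a z := by
    intro z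
    rw [gyrassoc (neg a) a z, Gyrogroup.neg_add, Gyrogroup.zero_add]
  have := (e x).symm.trans (by rw [h, e y])
  exact (gyr_bijective (neg a) a).injective this

theorem gyr_zero_left (b z : G) : gyr zero b z = z := by
  have := gyrassoc (zero : G) b z
  rw [Gyrogroup.zero_add, Gyrogroup.zero_add] at this
  exact (add_left_injective b this).symm

theorem gyr_neg_self (a z : G) : gyr (neg a) a z = z := by
  have := loop (neg a) a
  rw [Gyrogroup.neg_add] at this
  rw [← this, gyr_zero_left]

theorem left_cancel (a x : G) : add (neg a) (add a x) = x := by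
  rw [gyrassoc (neg a) a x, Gyrogroup.neg_add, Gyrogroup.zero_add, gyr_neg_self]

theorem gyr_self_neg (a z : G) : gyr a (neg a) z = z := by
  have := loop a (neg a)
  rw [Gyrogroup.add_neg] at this
  rw [← this, gyr_zero_left]

theorem left_cancel' (a x : G) : add a (add (neg a) x) = x := by
  rw [gyrassoc a (neg a) x, Gyrogroup.add_neg, Gyrogroup.zero_add, gyr_self_neg]

theorem neg_neg' (a : G) : neg (neg a) = a := by
  have := left_cancel (neg a) a
  rw [Gyrogroup.neg_add, Gyrogroup.add_zero] at this
  exact this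

theorem gyr_zero_right (a z : G) : gyr a zero z = z := by
  have := gyrassoc a (zero : G) z
  rw [Gyrogroup.zero_add, Gyrogroup.add_zero] at this
  exact (add_left_injective a this).symm

theorem neg_zero' : (neg zero : G) = zero := by
  have := Gyrogroup.neg_add (zero : G)
  rwa [Gyrogroup.add_zero] at this

theorem gyr_eq (a b c : G) :
    gyr a b c = add (neg (add a b)) (add a (add b c)) := by
  rw [gyrassoc a b c, left_cancel]

theorem gyr_zero_point (a b : G) : gyr a b zero = zero := by
  have := gyrassoc a b zero
  rw [Gyrogroup.add_zero b] at this
  have h2 : add (add a b) zero = add (add a b) (gyr a b zero) := by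
    rw [Gyrogroup.add_zero]; exact this
  exact (add_left_injective (add a b) h2).symm

/-- composition law (III) -/
theorem gyr_comp (a b c z : G) :
    gyr (add a b) (gyr a b c) (gyr a b z) = gyr a (add b c) (gyr b c z) := by
  have h1 : add a (add b (add c z))
      = add (add (add a b) (gyr a b c)) (gyr (add a b) (gyr a b c) (gyr a b z)) := by
    rw [gyrassoc a b (add c z), gyr_add a b c z, gyrassoc (add a b) (gyr a b c) (gyr a b z)]
  have h2 : add a (add b (add c z))
      = add (add a (add b c)) (gyr a (add b c) (gyr b c z)) := by
    rw [gyrassoc b c z, gyrassoc a (add b c) (gyr b c z)]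
  have h3 : add (add a b) (gyr a b c) = add a (add b c) := (gyrassoc a b c).symm
  rw [h3] at h1
  exact add_left_injective _ (h1.symm.trans h2)

/-- `gyr (neg a) (add a d)` is a left inverse of `gyr a d`. -/
theorem gyr_left_inv (a d z : G) : gyr (neg a) (add a d) (gyr a d z) = z := by
  have := gyr_comp (neg a) a d z
  rw [Gyrogroup.neg_add, gyr_neg_self, gyr_neg_self, gyr_zero_left] at this
  exact this.symm

/-- `gyr (neg a) (add a d)` is a right inverse of `gyr a d`. -/
theorem gyr_right_inv (a d z : G) : gyr a d (gyr (neg a) (add a d) z) = z := by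
  have h := gyr_comp a (neg a) (add a d) z
  rw [Gyrogroup.add_neg, gyr_self_neg, gyr_self_neg, gyr_zero_left, left_cancel] at h
  exact h.symm

end GyroAux

end Algebra
section Coset

open Gyrogroup GyroAux

variable {G : Type u} [Gyrogroup G]

namespace GyroAux

theorem zero_mem {H : Set G} (hs : IsSubgyrogroup H) : (zero : G) ∈ H := by
  obtain ⟨a, ha⟩ := hs.nonempty
  have := hs.add_mem (hs.neg_mem ha) ha
  rwa [Gyrogroup.neg_add] at this

theorem gyr_mem {H : Set G} (hH : IsStronglyLSubgyrogroup H) (a b : G) {h : G} (hh : h ∈ H) :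
    gyr a b h ∈ H :=
  hH.gyr_image_subset a b ⟨h, hh, rfl⟩

theorem lCoset_add {H : Set G} (hH : IsStronglyLSubgyrogroup H) (a : G) {h : G} (hh : h ∈ H) :
    lCoset H (add a h) = lCoset H a := by
  apply Set.Subset.antisymm
  · rintro x ⟨h'', hh'', rfl⟩
    refine ⟨add h (gyr (neg a) (add a h) h''), hH.add_mem hh (gyr_mem hH _ _ hh''), ?_⟩
    show add a (add h (gyr (neg a) (add a h) h'')) = add (add a h) h''
    rw [gyrassoc a h (gyr (neg a) (add a h) h''), gyr_right_inv]
  · rintro x ⟨h', hh', rfl⟩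
    refine ⟨gyr a h (add (neg h) h'), gyr_mem hH _ _ (hH.add_mem (hH.neg_mem hh) hh'), ?_⟩
    show add (add a h) (gyr a h (add (neg h) h')) = add a h'
    rw [← gyrassoc a h (add (neg h) h'), left_cancel']

theorem self_mem_lCoset (H : Set G) (h0 : (zero : G) ∈ H) (x : G) : x ∈ lCoset H x :=
  ⟨zero, h0, Gyrogroup.add_zero x⟩

theorem qmap_eq {H : Set G} (hH : IsStronglyLSubgyrogroup H) (a : G) {h : G} (hh : h ∈ H) :
    qmap H (add a h) = qmap H a :=
  Quotient.sound (lCoset_add hH a hh)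

/-- if `π x = π y` then `x = add y h` for some `h ∈ H`. -/
theorem exists_of_qmap_eq {H : Set G} (hH : IsStronglyLSubgyrogroup H) {x y : G}
    (e : qmap H x = qmap H y) : ∃ h ∈ H, x = add y h := by
  have : lCoset H x = lCoset H y := Quotient.exact e
  have hx : x ∈ lCoset H y := this ▸ self_mem_lCoset H (zero_mem hH.toIsSubgyrogroup) x
  obtain ⟨h, hh, e'⟩ := hx
  exact ⟨h, hh, e'.symm⟩

end GyroAux

end Coset

section Topo

open Gyrogroup GyroAux Filter Set

namespace GyroAux

variable {G : Type u} [Gyrogroup G] [TopologicalSpace G] [TopologicalGyrogroup G]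

theorem cont_add {X : Type*} [TopologicalSpace X] {f g : X → G}
    (hf : Continuous f) (hg : Continuous g) : Continuous fun x => add (f x) (g x) :=
  TopologicalGyrogroup.continuous_add.comp (hf.prodMk hg)

theorem cont_neg {X : Type*} [TopologicalSpace X] {f : X → G}
    (hf : Continuous f) : Continuous fun x => neg (f x) :=
  TopologicalGyrogroup.continuous_neg.comp hf

theorem cont_gyr {X : Type*} [TopologicalSpace X] {f g h : X → G}
    (hf : Continuous f) (hg : Continuous g) (hh : Continuous h) :
    Continuous fun x => gyr (f x) (g x) (h x) := by
  have : (fun x => gyr (f x) (g x) (h x))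
      = fun x => add (neg (add (f x) (g x))) (add (f x) (add (g x) (h x))) := by
    funext x; rw [gyr_eq]
  rw [this]
  exact cont_add (cont_neg (cont_add hf hg)) (cont_add hf (cont_add hg hh))

/-- Left translation as a homeomorphism. -/
def homeoL (a : G) : G ≃ₜ G where
  toFun := add a
  invFun := add (neg a)
  left_inv := left_cancel a
  right_inv := left_cancel' a
  continuous_toFun := cont_add continuous_const continuous_id
  continuous_invFun := cont_add continuous_const continuous_id

omit [TopologicalGyrogroup G] in
theorem cont_qmap (H : Set G) : Continuous (qmap H) :=
  continuous_quot_mk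

omit [TopologicalGyrogroup G] in
theorem isOpen_qmap_image {H : Set G} {Q : Set G} (hQ : IsOpen Q)
    (hsat : qmap H ⁻¹' (qmap H '' Q) = Q) : IsOpen (qmap H '' Q) := by
  rw [← (isQuotientMap_quotient_mk' (s := cosetSetoid H)).isOpen_preimage]
  show IsOpen (qmap H ⁻¹' (qmap H '' Q))
  rw [hsat]; exact hQ

end GyroAux

end Topo
section Shrink

open Gyrogroup Filter Set

namespace GyroAux

variable {G : Type u} [Gyrogroup G] [TopologicalSpace G] [TopologicalGyrogroup G]

theorem shrink : ∀ U : Set G, U ∈ nhds zero → ∃ V : Set G, IsOpen V ∧ (zero : G) ∈ V ∧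
    V ⊆ U ∧ (∀ x ∈ V, ∀ y ∈ V, add (neg x) y ∈ U) ∧
    (∀ a ∈ V, ∀ b ∈ V, ∀ c ∈ V, gyr a b c ∈ U) := by
  intro U hU
  have c1 : Continuous (fun p : G × G => add (neg p.1) p.2) :=
    cont_add (cont_neg continuous_fst) continuous_snd
  have m1 : (fun p : G × G => add (neg p.1) p.2) ⁻¹' U ∈ nhds ((zero : G), (zero : G)) := by
    refine c1.continuousAt.preimage_mem_nhds ?_
    show U ∈ nhds (add (neg zero) zero)
    rw [Gyrogroup.add_zero, neg_zero']
    exact hU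
  rw [nhds_prod_eq] at m1
  obtain ⟨u₁, hu₁, u₂, hu₂, hu⟩ := mem_prod_iff.mp m1
  have c2 : Continuous (fun p : G × G × G => gyr p.1 p.2.1 p.2.2) :=
    cont_gyr continuous_fst (continuous_fst.comp continuous_snd)
      (continuous_snd.comp continuous_snd)
  have m2 : (fun p : G × G × G => gyr p.1 p.2.1 p.2.2) ⁻¹' U
      ∈ nhds ((zero : G), (zero : G), (zero : G)) := by
    refine c2.continuousAt.preimage_mem_nhds ?_
    show U ∈ nhds (gyr zero zero zero)
    rw [gyr_zero_left]
    exact hU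
  rw [nhds_prod_eq] at m2
  obtain ⟨v₁, hv₁, w, hw, hvw⟩ := mem_prod_iff.mp m2
  rw [nhds_prod_eq] at hw
  obtain ⟨v₂, hv₂, v₃, hv₃, hv⟩ := mem_prod_iff.mp hw
  have hI : U ∩ u₁ ∩ u₂ ∩ v₁ ∩ v₂ ∩ v₃ ∈ nhds (zero : G) :=
    inter_mem (inter_mem (inter_mem (inter_mem (inter_mem hU hu₁) hu₂) hv₁) hv₂) hv₃
  refine ⟨interior (U ∩ u₁ ∩ u₂ ∩ v₁ ∩ v₂ ∩ v₃), isOpen_interior,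
    mem_interior_iff_mem_nhds.mpr hI, ?_, ?_, ?_⟩
  · exact interior_subset.trans (fun x hx => hx.1.1.1.1.1)
  · intro x hx y hy
    have hx' := interior_subset hx
    have hy' := interior_subset hy
    exact hu (Set.mk_mem_prod hx'.1.1.1.1.2 hy'.1.1.1.2)
  · intro a ha b hb c hc
    have ha' := interior_subset ha
    have hb' := interior_subset hb
    have hc' := interior_subset hc
    exact hvw (Set.mk_mem_prod ha'.1.1.2 (hv (Set.mk_mem_prod hb'.1.2 hc'.2)))

theorem exists_W (W' : ℕ → Set G) (hW' : ∀ k, W' k ∈ nhds (zero : G)) :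
    ∃ W : ℕ → Set G, W 0 = Set.univ ∧ (∀ k, IsOpen (W (k+1))) ∧ (∀ k, (zero : G) ∈ W k) ∧
      (∀ k, W (k+1) ⊆ W k) ∧ (∀ k, W (k+1) ⊆ W' k) ∧
      (∀ k, ∀ x ∈ W (k+1), ∀ y ∈ W (k+1), add (neg x) y ∈ W k) ∧
      (∀ k, ∀ a ∈ W (k+1), ∀ b ∈ W (k+1), ∀ c ∈ W (k+1), gyr a b c ∈ W k) := by
  choose sh hopen h0 hsubU hf1 hf2 using shrink (G := G)
  let F : ℕ → {V : Set G // V ∈ nhds (zero : G)} := fun n => Nat.rec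
    ⟨Set.univ, univ_mem⟩
    (fun k p => ⟨sh (p.1 ∩ W' k) (inter_mem p.2 (hW' k)),
      (hopen _ _).mem_nhds (h0 _ _)⟩) n
  have hF : ∀ k, (F (k+1)).1 = sh ((F k).1 ∩ W' k) (inter_mem (F k).2 (hW' k)) := fun _ => rfl
  refine ⟨fun n => (F n).1, rfl, ?_, ?_, ?_, ?_, ?_, ?_⟩
  · intro k; show IsOpen (F (k+1)).1; rw [hF k]; exact hopen _ _
  · intro k
    cases k with
    | zero => exact mem_univ _
    | succ k => show zero ∈ (F (k+1)).1; rw [hF k]; exact h0 _ _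
  · intro k; show (F (k+1)).1 ⊆ (F k).1; rw [hF k]
    exact (hsubU _ _).trans inter_subset_left
  · intro k; show (F (k+1)).1 ⊆ W' k; rw [hF k]
    exact (hsubU _ _).trans inter_subset_right
  · intro k x hx y hy
    have hx' : x ∈ (F (k+1)).1 := hx
    have hy' : y ∈ (F (k+1)).1 := hy
    rw [hF k] at hx' hy'
    exact (hf1 _ _ x hx' y hy').1
  · intro k a ha b hb c hc
    have ha' : a ∈ (F (k+1)).1 := ha
    have hb' : b ∈ (F (k+1)).1 := hb
    have hc' : c ∈ (F (k+1)).1 := hc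
    rw [hF k] at ha' hb' hc'
    exact (hf2 _ _ a ha' b hb' c hc').1

end GyroAux

end Shrink
/-- If `H` is a closed strongly L-subgyrogroup and both `H` and `G/H`
are first-countable, then `G` is first-countable. -/
theorem stmt_13 {G : Type u} [Gyrogroup G] [TopologicalSpace G] [TopologicalGyrogroup G]
    (H : Set G) (hH : IsStronglyLSubgyrogroup H) (hcl : IsClosed H)
    (h1 : FirstCountableTopology H)
    (h2 : FirstCountableTopology (GyroQuot H)) :
    FirstCountableTopology G := by
  classical
  open Gyrogroup GyroAux Filter Set in
  have h0H : (zero : G) ∈ H := zero_mem hH.toIsSubgyrogroup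
  -- countable basis at the base point of the quotient
  haveI hq : (nhds (qmap H zero)).IsCountablyGenerated :=
    h2.nhds_generated_countable (qmap H zero)
  obtain ⟨B, hB⟩ := (nhds (qmap H (zero : G))).exists_antitone_basis
  -- countable basis at the base point of H
  set z0 : H := ⟨zero, h0H⟩ with hz0
  haveI hqH : (nhds z0).IsCountablyGenerated := h1.nhds_generated_countable z0
  obtain ⟨M, hM⟩ := (nhds z0).exists_antitone_basis
  have hMk : ∀ k : ℕ, ∃ W'' ∈ nhds (zero : G), Subtype.val ⁻¹' W'' ⊆ M k := by
    intro k
    have hm : M k ∈ nhds z0 := hM.toHasBasis.mem_of_mem trivial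
    rw [nhds_subtype] at hm
    exact Filter.mem_comap.mp hm
  choose W' hW'mem hW'sub using hMk
  have P : ∀ V ∈ nhds (zero : G), ∃ k, ∀ x, x ∈ H → x ∈ W' k → x ∈ V := by
    intro V hV
    have hm : Subtype.val ⁻¹' V ∈ nhds z0 := by
      rw [nhds_subtype]
      exact Filter.preimage_mem_comap hV
    obtain ⟨k, -, hk⟩ := hM.toHasBasis.mem_iff.mp hm
    exact ⟨k, fun x hxH hxW => hk (hW'sub k (show (⟨x, hxH⟩ : H) ∈ _ from hxW))⟩
  obtain ⟨W, hW0, hWopen, hW0mem, hWsub, hWsubW', hWf1, hWf2⟩ := exists_W W' hW'mem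
  have Wmono : ∀ {j k : ℕ}, j ≤ k → W k ⊆ W j := by
    intro j k hjk
    induction hjk with
    | refl => exact subset_rfl
    | step h ih => exact (hWsub _).trans ih
  have hWnhds : ∀ k, W k ∈ nhds (zero : G) := by
    intro k
    cases k with
    | zero => rw [hW0]; exact univ_mem
    | succ k => exact (hWopen k).mem_nhds (hW0mem (k+1))
  -- the candidate countable neighborhood basis at `zero`
  set E : ℕ × ℕ → Set G :=
    fun p => (qmap H ⁻¹' B p.1) ∩ setAdd (W p.2) (H ∩ W p.2) with hE
  have hEnhds : ∀ p, E p ∈ nhds (zero : G) := by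
    intro p
    refine inter_mem ?_ ?_
    · refine (cont_qmap H).continuousAt.preimage_mem_nhds ?_
      exact hB.toHasBasis.mem_of_mem trivial
    · refine mem_of_superset (hWnhds p.2) ?_
      intro w hw
      exact ⟨w, hw, zero, ⟨h0H, hW0mem p.2⟩, Gyrogroup.add_zero w⟩
  -- main claim
  have key : ∀ t ∈ nhds (zero : G), ∃ p : ℕ × ℕ, E p ⊆ t := by
    intro t ht
    -- a "small" neighborhood V with V ⊕ V ⊆ t
    have cadd : Continuous (fun p : G × G => add p.1 p.2) := TopologicalGyrogroup.continuous_add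
    have m1 : (fun p : G × G => add p.1 p.2) ⁻¹' t ∈ nhds ((zero : G), (zero : G)) := by
      refine cadd.continuousAt.preimage_mem_nhds ?_
      show t ∈ nhds (add zero zero)
      rw [Gyrogroup.zero_add]
      exact ht
    rw [nhds_prod_eq] at m1
    obtain ⟨V₁, hV₁, V₂, hV₂, hVt⟩ := mem_prod_iff.mp m1
    have hVmem : V₁ ∩ V₂ ∈ nhds (zero : G) := inter_mem hV₁ hV₂
    set V : Set G := V₁ ∩ V₂ with hVdef
    have hVt' : ∀ x ∈ V, ∀ y ∈ V, add x y ∈ t := fun x hx y hy =>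
      hVt (Set.mk_mem_prod hx.1 hy.2)
    obtain ⟨p, hp⟩ := P V hVmem
    set m : ℕ := p + 2 with hm
    set Q : Set G := interior V ∩ W (m+3) with hQ
    have hQopen : IsOpen Q := isOpen_interior.inter (hWopen (m+2))
    have hQ0 : (zero : G) ∈ Q := ⟨mem_interior_iff_mem_nhds.mpr hVmem, hW0mem (m+3)⟩
    set T : Set G := {x | ∃ h, h ∈ H ∧ h ∈ W (m+1) ∧ add x h ∈ Q} with hT
    set S : Set G := W (m+2) \ T with hS
    set A : Set G := setAdd S H with hA
    have hQA : ∀ q ∈ Q, q ∉ A := by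
      rintro q hq ⟨s, hs, h, hh, rfl⟩
      have hsW : s ∈ W (m+2) := hs.1
      have hqW : add s h ∈ W (m+2) := hWsub (m+2) hq.2
      have hhW : h ∈ W (m+1) := by
        have := hWf1 (m+1) s hsW (add s h) hqW
        rwa [left_cancel] at this
      exact hs.2 ⟨h, hh, hhW, hq⟩
    have hAsat : ∀ x ∈ A, ∀ h ∈ H, add x h ∈ A := by
      rintro x ⟨s, hs, h', hh', rfl⟩ h hh
      refine ⟨s, hs, add h' (gyr (neg s) (add s h') h),
        hH.add_mem hh' (gyr_mem hH _ _ hh), ?_⟩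
      show add s (add h' (gyr (neg s) (add s h') h)) = add (add s h') h
      rw [gyrassoc s h' (gyr (neg s) (add s h') h), gyr_right_inv]
    have hclA : ∀ h ∈ H, ∀ x ∈ closure A, add x h ∈ closure A := by
      intro h hh x hx
      have hcont : Continuous (fun y : G => add y h) := cont_add continuous_id continuous_const
      have him : (fun y : G => add y h) '' closure A ⊆ closure ((fun y : G => add y h) '' A) :=
        image_closure_subset_closure_image hcont
      have hx2 := him ⟨x, hx, rfl⟩
      refine closure_mono ?_ hx2
      rintro _ ⟨a', ha', rfl⟩
      exact hAsat a' ha' h hh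
    set Q' : Set G := (closure A)ᶜ with hQ'
    have hQ'open : IsOpen Q' := isClosed_closure.isOpen_compl
    have h0Q' : (zero : G) ∈ Q' := by
      intro hmem
      have hsub : closure A ⊆ Qᶜ :=
        closure_minimal (fun a ha hq => hQA a hq ha) hQopen.isClosed_compl
      exact hsub hmem hQ0
    have hnotclA : ∀ x y : G, qmap H x = qmap H y → y ∈ Q' → x ∈ Q' := by
      intro x y he hy hx
      obtain ⟨h, hh, hxy⟩ := exists_of_qmap_eq hH he.symm
      exact hy (hxy ▸ hclA h hh x hx)
    have hsatQ' : qmap H ⁻¹' (qmap H '' Q') = Q' := by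
      apply Subset.antisymm
      · intro x hx
        obtain ⟨y, hyQ', he⟩ := hx
        exact hnotclA x y he.symm hyQ'
      · exact subset_preimage_image _ _
    have hQ'nhds : qmap H '' Q' ∈ nhds (qmap H (zero : G)) :=
      (isOpen_qmap_image hQ'open hsatQ').mem_nhds ⟨zero, h0Q', rfl⟩
    obtain ⟨n, -, hn⟩ := hB.toHasBasis.mem_iff.mp hQ'nhds
    have hUnS : ∀ w : G, qmap H w ∈ B n → w ∉ S := by
      intro w hw hwS
      obtain ⟨y, hy, he⟩ := hn hw
      have hwQ' : w ∈ Q' := hnotclA w y he.symm hy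
      exact hwQ' (subset_closure ⟨w, hwS, zero, h0H, Gyrogroup.add_zero w⟩)
    refine ⟨(n, m+2), ?_⟩
    rintro x ⟨hxU, w, hw, h, ⟨hhH, hhW⟩, rfl⟩
    have hπ : qmap H (add w h) = qmap H w := qmap_eq hH w hhH
    have hwB : qmap H w ∈ B n := by rw [← hπ]; exact hxU
    have hwT : w ∈ T := by
      by_contra hwT
      exact hUnS w hwB ⟨hw, hwT⟩
    obtain ⟨h', hh'H, hh'W, hwh'Q⟩ := hwT
    have harg : add (neg h') h ∈ W m := hWf1 m h' hh'W h (hWsub (m+1) hhW)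
    have hargH : add (neg h') h ∈ H := hH.add_mem (hH.neg_mem hh'H) hhH
    have hgW : gyr w h' (add (neg h') h) ∈ W (p+1) :=
      hWf2 (p+1) w (Wmono (by omega) hw) h' (Wmono (by omega) hh'W) _
        (show add (neg h') h ∈ W (p+2) from harg)
    have hgH : gyr w h' (add (neg h') h) ∈ H := gyr_mem hH _ _ hargH
    have hx : add w h = add (add w h') (gyr w h' (add (neg h') h)) := by
      rw [← gyrassoc w h' (add (neg h') h), left_cancel']
    rw [hx]
    exact hVt' _ (interior_subset hwh'Q.1) _ (hp _ hgH (hWsubW' p hgW))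
  -- assemble: countable basis at zero, then transfer to every point
  have hbasis : (nhds (zero : G)).HasBasis (fun _ : ℕ × ℕ => True) E := by
    rw [Filter.hasBasis_iff]
    intro t
    constructor
    · intro ht
      obtain ⟨pp, hpp⟩ := key t ht
      exact ⟨pp, trivial, hpp⟩
    · rintro ⟨pp, -, hpp⟩
      exact mem_of_superset (hEnhds pp) hpp
  refine ⟨fun a => ?_⟩
  have hmap : Filter.map (homeoL a) (nhds (zero : G)) = nhds a := by
    rw [Homeomorph.map_nhds_eq]
    congr 1
    exact Gyrogroup.add_zero a
  rw [← hmap]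
  exact (hbasis.map (homeoL a)).isCountablyGenerated
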